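/- For the TBSM quantum distribution, the first output bits satisfy the parity condition: Pr(a₁ ⊕ b₁ ⊕ c₁ = 1) = 1, where x₁ denotes the first component of each party's two-bit outcome. -/
import Mathlib


/-- Amplitude of the two-qubit source state `|ψ⟩ = λ₀|01⟩ + λ₁|10⟩`. -/
noncomputable def psiAmp (l0 l1 : ℝ) (q1 q2 : ZMod 2) : ℝ :=
  if q1 = 0 ∧ q2 = 1 then l0 else if q1 = 1 ∧ q2 = 0 then l1 else 0

/-- Amplitudes of the tilted Bell state measurement basis vectors `|φ_{x₁,x₂}⟩`. -/
noncomputable def phiAmp (u v w z : ℝ) (x : ZMod 2 × ZMod 2) (qL qR : ZMod 2) : ℝ :=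
  if x = (1, 0) then (if qL = 0 ∧ qR = 1 then u else if qL = 1 ∧ qR = 0 then v else 0)
  else if x = (1, 1) then (if qL = 0 ∧ qR = 1 then v else if qL = 1 ∧ qR = 0 then -u else 0)
  else if x = (0, 0) then (if qL = 0 ∧ qR = 0 then w else if qL = 1 ∧ qR = 1 then z else 0)
  else (if qL = 0 ∧ qR = 0 then z else if qL = 1 ∧ qR = 1 then -w else 0)

/-- Transition amplitude for the triangle network with sources
`α → (B_L, C_R)`, `β → (C_L, A_R)`, `γ → (A_L, B_R)`. -/
noncomputable def tbsmAmp (l0 l1 u v w z : ℝ) (xa xb xc : ZMod 2 × ZMod 2) : ℝ :=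
  ∑ aL : ZMod 2, ∑ aR : ZMod 2, ∑ bL : ZMod 2, ∑ bR : ZMod 2, ∑ cL : ZMod 2, ∑ cR : ZMod 2,
    phiAmp u v w z xa aL aR * phiAmp u v w z xb bL bR * phiAmp u v w z xc cL cR *
      psiAmp l0 l1 bL cR * psiAmp l0 l1 cL aR * psiAmp l0 l1 aL bR

/-- Born-rule probability of the joint outcome `(x_a, x_b, x_c)` in the TBSM model. -/
noncomputable def tbsmP (l0 l1 u v w z : ℝ) (xa xb xc : ZMod 2 × ZMod 2) : ℝ :=
  (tbsmAmp l0 l1 u v w z xa xb xc) ^ 2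

/-- For the TBSM quantum distribution the first output bits satisfy the parity condition
`a₁ ⊕ b₁ ⊕ c₁ = 1` with probability one. -/
lemma zmod2_sum (f : ZMod 2 → ℝ) : ∑ x, f x = f 0 + f 1 := Fin.sum_univ_two f

set_option maxHeartbeats 4000000 in
theorem stmt_13 (l0 l1 u v w z : ℝ)
    (hl0 : 0 ≤ l0) (hl1 : 0 ≤ l1) (hu : 0 ≤ u) (hv : 0 ≤ v) (hw : 0 ≤ w) (hz : 0 ≤ z)
    (hnl : l0 ^ 2 + l1 ^ 2 = 1) (hnu : u ^ 2 + v ^ 2 = 1) (hnw : w ^ 2 + z ^ 2 = 1) :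
    ∑ x ∈ Finset.univ.filter
        (fun x : (ZMod 2 × ZMod 2) × (ZMod 2 × ZMod 2) × (ZMod 2 × ZMod 2) =>
          x.1.1 + x.2.1.1 + x.2.2.1 = 1),
      tbsmP l0 l1 u v w z x.1 x.2.1 x.2.2 = 1 := by
  rw [Finset.sum_filter]
  simp only [Fintype.sum_prod_type, zmod2_sum, tbsmP, tbsmAmp, phiAmp, psiAmp]
  norm_num [Prod.ext_iff, Prod.fst_one, Prod.snd_one, Prod.fst_zero, Prod.snd_zero,
    show (2:ZMod 2)=0 from rfl, show (3:ZMod 2)=1 from rfl]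
  simp only [show ((3:ZMod 2) = 1) = True from by decide, if_true]
  linear_combination ((l0^2+l1^2)^2+(l0^2+l1^2)+1) * hnl +
    ((l0^6+l1^6)*((u^2+v^2)^2+(u^2+v^2)+1) + 3*l0^2*l1^2*(l0^2+l1^2)) * hnu +
    (3*l0^2*l1^2*(l0^2+l1^2)*(u^2+v^2)*((w^2+z^2)+1)) * hnw
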